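/- Fix β > 0, x ∈ (0,1), and 0 < y_{i-1} < y_i < 1. Then the composition identity h_{β(1-y_{i-1})}((x - h_β(x,y_{i-1}))/(1-y_{i-1}), (y_i - y_{i-1})/(1-y_{i-1})) = (h_β(x,y_i) - h_β(x,y_{i-1}))/(1-y_{i-1}) holds. -/

import Mathlib

/-- The limiting height profile `h_β(x,y)` of the Mallows measure. -/
noncomputable def hFn (β x y : ℝ) : ℝ :=
  (1 / β) * (Real.log (1 - Real.exp (-β)) -
    Real.log (Real.exp (-β * x) + Real.exp (-β * y) - Real.exp (-β * (x + y)) - Real.exp (-β)))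

/-- The composition identity for the limiting height profile:
`h_{β(1-y₁)}((x - h_β(x,y₁))/(1-y₁), (y₂-y₁)/(1-y₁)) = (h_β(x,y₂) - h_β(x,y₁))/(1-y₁)`
for `0 < y₁ < y₂ < 1`. -/
theorem hFn_composition (β x y₁ y₂ : ℝ) (hβ : 0 < β)
    (hx : x ∈ Set.Ioo (0:ℝ) 1) (hy1 : 0 < y₁) (hy12 : y₁ < y₂) (hy2 : y₂ < 1) :
    hFn (β * (1 - y₁)) ((x - hFn β x y₁) / (1 - y₁)) ((y₂ - y₁) / (1 - y₁))
      = (hFn β x y₂ - hFn β x y₁) / (1 - y₁) := by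
  obtain ⟨hx0, hx1⟩ := hx
  have hy1' : y₁ < 1 := hy12.trans hy2
  have h1y : (0:ℝ) < 1 - y₁ := by linarith
  have hqu : Real.exp (-β) < Real.exp (-β * x) := Real.exp_lt_exp.mpr (by nlinarith)
  have hu1 : Real.exp (-β * x) < 1 := by
    rw [show (1:ℝ) = Real.exp 0 by simp]
    exact Real.exp_lt_exp.mpr (by nlinarith)
  have hv11 : Real.exp (-β * y₁) < 1 := by
    rw [show (1:ℝ) = Real.exp 0 by simp]
    exact Real.exp_lt_exp.mpr (by nlinarith)
  have hv21 : Real.exp (-β * y₂) < 1 := by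
    rw [show (1:ℝ) = Real.exp 0 by simp]
    exact Real.exp_lt_exp.mpr (by nlinarith)
  have hqv1 : Real.exp (-β) < Real.exp (-β * y₁) := Real.exp_lt_exp.mpr (by nlinarith)
  have hqv2 : Real.exp (-β) < Real.exp (-β * y₂) := Real.exp_lt_exp.mpr (by nlinarith)
  have hv21' : Real.exp (-β * y₂) < Real.exp (-β * y₁) := Real.exp_lt_exp.mpr (by nlinarith)
  have hxy1 : Real.exp (-β * (x + y₁)) = Real.exp (-β * x) * Real.exp (-β * y₁) := by
    rw [← Real.exp_add]; ring_nf
  have hxy2 : Real.exp (-β * (x + y₂)) = Real.exp (-β * x) * Real.exp (-β * y₂) := by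
    rw [← Real.exp_add]; ring_nf
  set q := Real.exp (-β) with hqdef
  set u := Real.exp (-β * x) with hudef
  set v₁ := Real.exp (-β * y₁) with hv1def
  set v₂ := Real.exp (-β * y₂) with hv2def
  have hqpos : 0 < q := Real.exp_pos _
  have hupos : 0 < u := Real.exp_pos _
  have hv1pos : 0 < v₁ := Real.exp_pos _
  have hv2pos : 0 < v₂ := Real.exp_pos _
  have h1q : 0 < 1 - q := by nlinarith
  have hD1 : 0 < u + v₁ - u * v₁ - q := by nlinarith
  have hD2 : 0 < u + v₂ - u * v₂ - q := by nlinarith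
  set D₁ := u + v₁ - u * v₁ - q with hD1def
  set D₂ := u + v₂ - u * v₂ - q with hD2def
  have hβ' : (0:ℝ) < β * (1 - y₁) := mul_pos hβ h1y
  set a := (x - hFn β x y₁) / (1 - y₁) with hadef
  set b := (y₂ - y₁) / (1 - y₁) with hbdef
  -- value of h₁ exponential
  have Ea : Real.exp (-(β * (1 - y₁)) * a) = u * (1 - q) / D₁ := by
    rw [hadef, show -(β * (1 - y₁)) * ((x - hFn β x y₁) / (1 - y₁))
        = -β * x + β * hFn β x y₁ by field_simp; ring]
    rw [Real.exp_add, ← hudef]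
    rw [hFn, hxy1, ← hqdef, ← hudef, ← hv1def, ← hD1def]
    rw [show β * (1 / β * (Real.log (1 - q) - Real.log D₁))
        = Real.log (1 - q) - Real.log D₁ by field_simp]
    rw [Real.exp_sub, Real.exp_log h1q, Real.exp_log hD1]
    ring
  have Eb : Real.exp (-(β * (1 - y₁)) * b) = v₂ / v₁ := by
    rw [hbdef, show -(β * (1 - y₁)) * ((y₂ - y₁) / (1 - y₁)) = -β * y₂ - -β * y₁ by
      field_simp; ring]
    rw [Real.exp_sub, ← hv1def, ← hv2def]
  have Eab : Real.exp (-(β * (1 - y₁)) * (a + b)) = u * (1 - q) / D₁ * (v₂ / v₁) := by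
    rw [show -(β * (1 - y₁)) * (a + b) = -(β * (1 - y₁)) * a + -(β * (1 - y₁)) * b by ring]
    rw [Real.exp_add, Ea, Eb]
  have Eβ' : Real.exp (-(β * (1 - y₁))) = q / v₁ := by
    rw [show -(β * (1 - y₁)) = -β - -β * y₁ by ring, Real.exp_sub, ← hqdef, ← hv1def]
  -- the inner argument
  have hE : u * (1 - q) / D₁ + v₂ / v₁ - u * (1 - q) / D₁ * (v₂ / v₁) - q / v₁
      = (1 - q / v₁) * (D₂ / D₁) := by
    have hD1ne : u + v₁ - u * v₁ - q ≠ 0 := hD1.ne'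
    have hv1ne : v₁ ≠ 0 := hv1pos.ne'
    rw [hD1def, hD2def]
    field_simp
    ring
  have h1qv : 0 < 1 - q / v₁ := by
    rw [sub_pos, div_lt_one hv1pos]; exact hqv1
  have hlogE : Real.log ((1 - q / v₁) * (D₂ / D₁))
      = Real.log (1 - q / v₁) + (Real.log D₂ - Real.log D₁) := by
    rw [Real.log_mul (ne_of_gt h1qv) (ne_of_gt (div_pos hD2 hD1)),
      Real.log_div (ne_of_gt hD2) (ne_of_gt hD1)]
  rw [hFn, Eβ', Ea, Eb, Eab, hE, hlogE]
  rw [hFn, hFn, hxy1, hxy2, ← hqdef, ← hudef, ← hv1def, ← hv2def, ← hD1def, ← hD2def]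
  field_simp
  ring
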